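/- Let (K,𝔐) be an adelic field satisfying the product formula, m = (m_0,…,m_r) ∈ M^{r+1}, α = (α_0,…,α_r) ∈ (K^×)^{r+1}, and X a projective toric variety compatible with Δ = conv(m_0,…,m_r). Let D̄ = D̄_{m,α} be the toric metrized divisor on X whose v-adic metric is the homothecy by |α_0|_v^{−1} of the inverse image under the monomial map φ_{m,α} of the metric on the hyperplane divisor of ℙ^r_K given by the ℓ¹-norm at Archimedean places and the canonical metric at non-Archimedean places. Then D̄ is semipositive and generated by small sections; its v-adic metric satisfies ‖s_D(p)‖_v = (∑_{j=0}^r |α_j χ^{m_j}(p)|_v)^{−1} if v is Archimedean and (max_{0≤j≤r} |α_j χ^{m_j}(p)|_v)^{−1} if v is non-Archimedean; its v-adic metric function is ψ_{D̄,v}(u) = −log(∑_j |α_j|_v e^{−⟨m_j,u⟩}) for Archimedean v and min_j(⟨m_j,u⟩ − log|α_j|_v) for non-Archimedean v; and its v-adic roof function at x ∈ Δ equals max_λ ∑_j λ_j log(|α_j|_v/λ_j) for Archimedean v and max_λ ∑_j λ_j log|α_j|_v for non-Archimedean v, the maximum over λ ∈ ℝ_{≥0}^{r+1} with ∑_j λ_j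 = 1 and ∑_j λ_j m_j = x. -/

import Mathlib

open scoped BigOperators Pointwise TensorProduct Classical

noncomputable section

/-! ## Adelic fields -/

/-- An absolute value is Archimedean if it is not non-Archimedean. -/
def IsArchPlace {K : Type} [CommRing K] (v : AbsoluteValue K ℝ) : Prop :=
  ¬ IsNonarchimedean (fun x : K => v x)

/-- An absolute value associated to a nontrivial discrete valuation. -/
def IsDiscretePlace {K : Type} [CommRing K] (v : AbsoluteValue K ℝ) : Prop :=
  IsNonarchimedean (fun x : K => v x) ∧ (∃ x : K, x ≠ 0 ∧ v x ≠ 1) ∧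
    ∃ c : ℝ, 1 < c ∧ ∀ x : K, x ≠ 0 → ∃ k : ℤ, v x = c ^ k

/-- An adelic field structure on `K`: a set of places, each consisting of an absolute
value that is either Archimedean or associated to a nontrivial discrete valuation,
together with a positive weight, such that every nonzero element has absolute value `1`
at all but finitely many places. -/
structure AdelicField (K : Type) [CommRing K] : Type 1 where
  places : Type
  absv : places → AbsoluteValue K ℝ
  weight : places → ℝ
  weight_pos : ∀ v, 0 < weight v
  arch_or_discrete : ∀ v, IsArchPlace (absv v) ∨ IsDiscretePlace (absv v)
  finite_ne_one : ∀ x : K, x ≠ 0 → {v : places | absv v x ≠ 1}.Finite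

/-- The product formula: `∏_v |x|_v^{n_v} = 1` for all nonzero `x`. -/
def AdelicField.ProductFormula {K : Type} [CommRing K] (A : AdelicField K) : Prop :=
  ∀ x : K, x ≠ 0 → (∏ᶠ v : A.places, A.absv v x ^ A.weight v) = 1

/-- The place `v` is non-Archimedean. -/
def AdelicField.IsNonarch {K : Type} [CommRing K] (A : AdelicField K) (v : A.places) : Prop :=
  IsNonarchimedean (fun x : K => A.absv v x)

/-! ## Mixed volumes and mixed integrals -/

/-- Minkowski sum of a finite family of subsets of `ℝ^n`. -/
def minkSum {n : ℕ} {ι : Type} (S : Finset ι) (Δ : ι → Set (Fin n → ℝ)) : Set (Fin n → ℝ) :=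
  ∑ i ∈ S, Δ i

/-- The mixed volume of a family of convex bodies in `ℝ^n`, normalized so that the
lattice `ℤ^n` has covolume `1` (inclusion-exclusion over Minkowski sums). -/
def mixedVolume {n : ℕ} {ι : Type} [Fintype ι] (Δ : ι → Set (Fin n → ℝ)) : ℝ :=
  ∑ S ∈ (Finset.univ : Finset ι).powerset,
    if S.Nonempty then
      (-1 : ℝ) ^ (Fintype.card ι - S.card) * (MeasureTheory.volume (minkSum S Δ)).toReal
    else 0

/-- The sup-convolution of a finite family of functions on convex bodies. -/
def supConvolution {n : ℕ} {ι : Type} (S : Finset ι) (Δ : ι → Set (Fin n → ℝ))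
    (g : ι → (Fin n → ℝ) → ℝ) (x : Fin n → ℝ) : ℝ :=
  sSup {t : ℝ | ∃ c : ι → (Fin n → ℝ), (∀ i ∈ S, c i ∈ Δ i) ∧
    (∑ i ∈ S, c i) = x ∧ t = ∑ i ∈ S, g i (c i)}

/-- The mixed integral of a family of concave functions `g i : Δ i → ℝ`. -/
def mixedIntegral {n : ℕ} {ι : Type} [Fintype ι] (Δ : ι → Set (Fin n → ℝ))
    (g : ι → (Fin n → ℝ) → ℝ) : ℝ :=
  ∑ S ∈ (Finset.univ : Finset ι).powerset,
    if S.Nonempty then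
      (-1 : ℝ) ^ (Fintype.card ι - S.card) *
        ∫ x in minkSum S Δ, supConvolution S Δ g x
    else 0

/-! ## Laurent polynomials and Newton polytopes -/

/-- The algebra `K[M]` of Laurent polynomials in `n` variables, i.e. the group
algebra of the lattice `M = ℤ^n`. -/
abbrev Laurent (K : Type) [CommRing K] (n : ℕ) : Type := AddMonoidAlgebra K (Fin n → ℤ)

/-- A lattice point viewed inside `M_ℝ = ℝ^n`. -/
def toRealVec {n : ℕ} (m : Fin n → ℤ) : Fin n → ℝ := fun i => (m i : ℝ)

/-- The Newton polytope of a Laurent polynomial: the convex hull of its support. -/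
def newtonPolytope {K : Type} [CommRing K] {n : ℕ} (f : Laurent K n) : Set (Fin n → ℝ) :=
  convexHull ℝ (toRealVec '' (f.coeff.support : Set (Fin n → ℤ)))

/-! ## The 0-cycle of isolated zeros in the torus -/

/-- The set of isolated closed points of the subscheme of the torus
`𝕋 = Spec K[M]` cut out by the family `f`. -/
def isolatedZeros {K : Type} [CommRing K] {n : ℕ} (f : Fin n → Laurent K n) :
    Set (PrimeSpectrum (Laurent K n)) :=
  {x | x.asIdeal.IsMaximal ∧ x ∈ PrimeSpectrum.zeroLocus (Set.range f) ∧
    ∃ U : Set (PrimeSpectrum (Laurent K n)), IsOpen U ∧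
      U ∩ PrimeSpectrum.zeroLocus (Set.range f) = {x}}

/-- The intersection multiplicity `dim_K (R_𝔪 / I R_𝔪)` of an ideal `I` at a
(maximal) prime `𝔪`. -/
def localMult (K : Type) [Field K] {R : Type} [CommRing R] [Algebra K R]
    (I : Ideal R) (m : Ideal R) : ℕ :=
  if h : m.IsPrime then
    letI := h
    letI : Algebra K (Localization m.primeCompl) :=
      ((algebraMap R (Localization m.primeCompl)).comp (algebraMap K R)).toAlgebra
    Module.finrank K
      ((Localization m.primeCompl) ⧸ I.map (algebraMap R (Localization m.primeCompl)))
  else 0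


/-! ## Lengths -/

/-- The `v`-adic (logarithmic) length of a vector of coefficients: the logarithm of the
sum (Archimedean `v`) or of the maximum (non-Archimedean `v`) of the `v`-adic absolute
values of the entries. -/
def placeLen {K : Type} [CommRing K] (A : AdelicField K) (v : A.places)
    {I : Type} (T : Finset I) (c : I → K) : ℝ :=
  if A.IsNonarch v then
    Real.log (sSup ((fun i => A.absv v (c i)) '' (T : Set I)))
  else Real.log (∑ i ∈ T, A.absv v (c i))

/-- The (logarithmic) length `ℓ = ∑_v n_v ℓ_v` of a vector of coefficients. -/
def len {K : Type} [CommRing K] (A : AdelicField K) {I : Type} (T : Finset I)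
    (c : I → K) : ℝ :=
  ∑ᶠ v : A.places, A.weight v * placeLen A v T c

/-- The length of a Laurent polynomial: the length of its coefficient vector. -/
def lenLaurent {K : Type} [CommRing K] {n : ℕ} (A : AdelicField K) (f : Laurent K n) : ℝ :=
  len A f.coeff.support (fun m => f.coeff m)

/-- The length of a multivariate polynomial: the length of its coefficient vector. -/
def lenMvPoly {K : Type} [CommRing K] {σ : Type} (A : AdelicField K)
    (g : MvPolynomial σ K) : ℝ :=
  len A g.support (fun d => MvPolynomial.coeff d g)

/-! ## Concave metric data attached to a Laurent polynomial -/

/-- The concave function `ψ_{f,v}` on `N_ℝ` attached to a Laurent polynomial `f` and a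
place `v`:  `-log ∑_m |a_m|_v e^{-⟨m,u⟩}` (Archimedean `v`) resp.
`-log max_m |a_m|_v e^{-⟨m,u⟩}` (non-Archimedean `v`). -/
def psiOf {K : Type} [CommRing K] {n : ℕ} (A : AdelicField K) (v : A.places)
    (f : Laurent K n) (u : Fin n → ℝ) : ℝ :=
  if A.IsNonarch v then
    - Real.log (sSup ((fun m : Fin n → ℤ =>
        A.absv v (f.coeff m) * Real.exp (-(∑ i, (m i : ℝ) * u i))) '' (f.coeff.support : Set _)))
  else
    - Real.log (∑ m ∈ f.coeff.support, A.absv v (f.coeff m) * Real.exp (-(∑ i, (m i : ℝ) * u i)))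

/-- The Legendre-Fenchel dual `ψ^∨(x) = inf_u (⟨x,u⟩ - ψ(u))` of a concave function on
`N_ℝ`; for the functions considered here it is concave with domain the corresponding
polytope. -/
def legendreDualFn {n : ℕ} (ψ : (Fin n → ℝ) → ℝ) (x : Fin n → ℝ) : ℝ :=
  sInf (Set.range fun u : Fin n → ℝ => (∑ i, x i * u i) - ψ u)

/-- The metric function `ψ(u) = inf_{x ∈ Δ} (⟨x,u⟩ - θ(x))` associated to a roof
function `θ` on a polytope `Δ` (Legendre-Fenchel duality). -/
def metricFnOfRoof {n : ℕ} (Δ : Set (Fin n → ℝ)) (θ : (Fin n → ℝ) → ℝ)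
    (u : Fin n → ℝ) : ℝ :=
  sInf ((fun x => (∑ i, x i * u i) - θ x) '' Δ)

/-! ## Completions and the Artinian decomposition `F ⊗_K K_v ≅ ⊕_w E_w` -/

/-- Completeness of a (commutative) ring with respect to an absolute value:
every Cauchy sequence converges. -/
def IsCauchyComplete {L : Type} [CommRing L] (ab : AbsoluteValue L ℝ) : Prop :=
  ∀ s : ℕ → L,
    (∀ ε : ℝ, 0 < ε → ∃ N : ℕ, ∀ p q : ℕ, N ≤ p → N ≤ q → ab (s p - s q) < ε) →
    ∃ y : L, ∀ ε : ℝ, 0 < ε → ∃ N : ℕ, ∀ p : ℕ, N ≤ p → ab (s p - y) < ε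

/-- Density of the image of `ι : K →+* L` with respect to an absolute value on `L`. -/
def IsDenseEmbRange {K L : Type} [CommRing K] [CommRing L] (f : K →+* L)
    (ab : AbsoluteValue L ℝ) : Prop :=
  ∀ (y : L) (ε : ℝ), 0 < ε → ∃ x : K, ab (y - f x) < ε

attribute [local instance] Algebra.TensorProduct.rightAlgebra

/-- A decomposition `F ⊗_K K_v ≅ ⊕_w E_w` of the base change of a finite extension
`F` of `K` to the completion `K_v`, into local Artinian `K_v`-algebras indexed by the
absolute values `w` of `F` extending `v`, where the residue field of `E_w` is the
completion `F_w`. -/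
structure ArtinDecomposition (K F Kv : Type) [Field K] [CommRing F] [Algebra K F]
    [Field Kv] [Algebra K Kv] {W : Type} (wabs : W → AbsoluteValue F ℝ) : Type 1 where
  E : W → Type
  [ringE : ∀ w, CommRing (E w)]
  [algE : ∀ w, Algebra Kv (E w)]
  [localE : ∀ w, IsLocalRing (E w)]
  artinianE : ∀ w, IsArtinianRing (E w)
  [finW : Fintype W]
  equiv : Nonempty ((F ⊗[K] Kv) ≃ₐ[Kv] ((w : W) → E w))
  residue : ∀ (w : W) (Fw : Type) [Field Fw] (emb : F →+* Fw) (ab : AbsoluteValue Fw ℝ),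
    (∀ x : F, ab (emb x) = wabs w x) → IsDenseEmbRange emb ab → IsCauchyComplete ab →
    Nonempty (IsLocalRing.ResidueField (E w) ≃+* Fw)

attribute [instance] ArtinDecomposition.ringE ArtinDecomposition.algE
  ArtinDecomposition.localE

/-! ## Adelic field extensions -/

/-- An adelic field extension `(F, 𝔑)` of `(K, 𝔐)`: an adelic structure on `F`
together with a map of places lying over the places of `K`, such that the places of
`F` over `v ∈ 𝔐` are exactly the absolute values of `F` extending `|·|_v`. -/
structure AdelicExtensionOf {K : Type} [Field K] (A : AdelicField K) (F : Type)
    [CommRing F] [Algebra K F] : Type 1 where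
  B : AdelicField F
  res : B.places → A.places
  compat : ∀ (w : B.places) (x : K), B.absv w (algebraMap K F x) = A.absv (res w) x
  fiber_surj : ∀ (v : A.places) (w' : AbsoluteValue F ℝ),
    (∀ x : K, w' (algebraMap K F x) = A.absv v x) →
    ∃ w : B.places, res w = v ∧ B.absv w = w'
  fiber_inj : ∀ w w' : B.places, res w = res w' → B.absv w = B.absv w' → w = w'

/-- The weights of an adelic field extension are given, via the Artinian decomposition
`F ⊗_K K_v ≅ ⊕_w E_w`, by `n_w = (dim_{K_v} E_w / [F : K]) · n_v`. -/
def AdelicExtensionOf.WeightSpec {K : Type} [Field K] {A : AdelicField K} {F : Type}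
    [CommRing F] [Algebra K F] (e : AdelicExtensionOf A F) : Prop :=
  ∀ (v : A.places) (Kv : Type) [Field Kv] [Algebra K Kv] (vext : AbsoluteValue Kv ℝ),
    (∀ x : K, vext (algebraMap K Kv x) = A.absv v x) →
    IsDenseEmbRange (algebraMap K Kv) vext → IsCauchyComplete vext →
    ∀ (D : ArtinDecomposition K F Kv
        (fun w : {w : e.B.places // e.res w = v} => e.B.absv w.1))
      (w : {w : e.B.places // e.res w = v}),
      e.B.weight w.1 =
        (Module.finrank Kv (D.E w) : ℝ) / (Module.finrank K F : ℝ) * A.weight v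

/-! ## Toric metrized divisors and heights of closed points of the torus -/

/-- The valuation vector `val_w(t) = (-log |t_i|_w)_i` of a tuple. -/
def valVec {F : Type} [CommRing F] {n : ℕ} (ab : AbsoluteValue F ℝ) (t : Fin n → F) :
    Fin n → ℝ := fun i => - Real.log (ab (t i))

/-- The character `χ^{e_i}` in `K[M]`. -/
def basisChar (K : Type) [CommRing K] {n : ℕ} (i : Fin n) : Laurent K n :=
  AddMonoidAlgebra.single (Pi.single i (1 : ℤ)) (1 : K)

/-- The coordinates of the closed point of the torus with maximal ideal `m`,
i.e. the images of the characters `χ^{e_i}` in the residue field `K[M]/m`. -/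
def torusCoord {K : Type} [CommRing K] {n : ℕ} (m : Ideal (Laurent K n)) (i : Fin n) :
    Laurent K n ⧸ m := Ideal.Quotient.mk m (basisChar K i)

/-- The global height of the closed point of the torus with (maximal) ideal `m`,
with respect to the nef toric metrized divisor determined by the polytope `Δ₀` and
the family of `v`-adic roof functions `θ v`, computed through an adelic field extension
of `(K, 𝔐)` to the residue field `K[M]/m`:
`h(p) = [κ(p):K] · ∑_w n_w · (-ψ_v(val_w(p)))` where `ψ_v` is the `v`-adic metric
function, i.e. the Legendre-Fenchel dual of the roof function `θ v`. -/
def toricPointHeight {K : Type} [Field K] {n : ℕ} (A : AdelicField K)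
    (Δ₀ : Set (Fin n → ℝ)) (θ : A.places → (Fin n → ℝ) → ℝ)
    (m : Ideal (Laurent K n)) (ext : AdelicExtensionOf A (Laurent K n ⧸ m)) : ℝ :=
  (Module.finrank K (Laurent K n ⧸ m) : ℝ) *
    ∑ᶠ w : ext.B.places, ext.B.weight w *
      (- metricFnOfRoof Δ₀ (θ (ext.res w)) (valVec (ext.B.absv w) (torusCoord m)))

/-- The standard simplex of `ℝ^n`, the polytope of the divisor of the hyperplane at
infinity of `ℙ^n`. -/
def stdSimplexSet (n : ℕ) : Set (Fin n → ℝ) :=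
  convexHull ℝ (insert 0 (Set.range fun i : Fin n => toRealVec (Pi.single i 1)))

/-- A polynomial viewed as a Laurent polynomial, i.e. a regular function on the torus
`𝔾_m^n ⊆ ℙ^n`. -/
def polyToLaurent (K : Type) [CommRing K] {n : ℕ} (g : MvPolynomial (Fin n) K) :
    Laurent K n :=
  MvPolynomial.aeval (fun i => basisChar K i) g

/-! ## Evaluation of Laurent polynomials at points of the torus -/

/-- The monoid homomorphism `M = ℤ^n → Lˣ` sending `m` to `x^m = ∏ x_i^{m_i}`. -/
def torusUnitsHom {L : Type} [CommRing L] {n : ℕ} (x : Fin n → Lˣ) :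
    Multiplicative (Fin n → ℤ) →* Lˣ :=
  MonoidHom.mk' (fun m => ∏ i, x i ^ (Multiplicative.toAdd m i))
    (by
      intro a b
      simp [toAdd_mul, Pi.add_apply, zpow_add, Finset.prod_mul_distrib])

/-- Evaluation of Laurent polynomials over `L` at a point `x ∈ 𝕋(L) = (Lˣ)^n`,
as an algebra homomorphism `L[M] → L`. -/
def laurentEvalHom {L : Type} [CommRing L] {n : ℕ} (x : Fin n → Lˣ) :
    Laurent L n →ₐ[L] L :=
  AddMonoidAlgebra.lift L L (Fin n → ℤ) ((Units.coeHom L).comp (torusUnitsHom x))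

/-- Evaluation at a point of the torus with coordinates in an extension `F` of `K`. -/
def laurentEvalExt {K F : Type} [CommRing K] [CommRing F] [Algebra K F] {n : ℕ}
    (x : Fin n → Fˣ) (f : Laurent K n) : F :=
  ∑ m ∈ f.coeff.support, algebraMap K F (f.coeff m) * ((∏ i, x i ^ (m i) : Fˣ) : F)

/-- Base change of a Laurent polynomial along `K → L`. -/
def laurentBaseChange {K : Type} [CommRing K] {n : ℕ} (L : Type) [CommRing L]
    [Algebra K L] (f : Laurent K n) : Laurent L n :=
  AddMonoidAlgebra.ofCoeff (Finsupp.mapRange (algebraMap K L) (map_zero _) f.coeff)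

/-- The point `x ∈ 𝕋(L) = (Lˣ)^n` is an isolated solution of the system `f = 0`:
it is a common zero of the `f_i` and the corresponding closed point is an isolated
point of the zero locus. -/
def isIsolatedSolution {L : Type} [Field L] {n : ℕ} (f : Fin n → Laurent L n)
    (x : Fin n → Lˣ) : Prop :=
  (∀ i, laurentEvalHom x (f i) = 0) ∧
  ∃ U : Set (PrimeSpectrum (Laurent L n)), IsOpen U ∧
    U ∩ PrimeSpectrum.zeroLocus (Set.range f) =
      {⟨RingHom.ker (laurentEvalHom x).toRingHom, RingHom.ker_isPrime _⟩}

/-! ## Local heights of cycles on a normal projective variety (abstract framework)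

The Berkovich-analytic ingredients (semipositive metrics, Monge-Ampère measures and
local heights of cycles) are not available in Mathlib; they are axiomatised here by a
structure recording, for a normal projective variety `X` over an adelic field
`(K, 𝔐)`, its groups of cycles, metrized divisors and their rational sections,
proper intersection, the intersection product `div(s)·Y`, the `v`-adic Monge-Ampère
integrals, and the inductively defined local heights. -/
structure HeightTheory (K : Type) [Field K] (A : AdelicField K) : Type 1 where
  /-- cycles of the normal projective variety `X` -/
  Cyc : Type
  [grp : AddCommGroup Cyc]
  /-- `Y` is a cycle of pure dimension `k` -/
  IsDim : Cyc → ℤ → Prop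
  /-- effective cycles -/
  Eff : Cyc → Prop
  /-- metrized divisors `D̄ = (D, (‖·‖_v)_v)` on `X` -/
  MDiv : Type
  /-- semipositive metrized divisors -/
  Semipos : MDiv → Prop
  /-- nef metrized divisors: `D` nef, `D̄` semipositive and `h_{D̄}(p) ≥ 0` for all
  closed points `p` -/
  Nef : MDiv → Prop
  /-- metrized divisors generated by small sections -/
  GenSmall : MDiv → Prop
  /-- rational sections of `O(D)` -/
  Sec : MDiv → Type
  /-- global sections -/
  IsGlobal : ∀ {D : MDiv}, Sec D → Prop
  /-- `D̄`-small global sections: `sup ‖s‖_v ≤ 1` for all `v` -/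
  Small : ∀ {D : MDiv}, Sec D → Prop
  small_global : ∀ {D : MDiv} (s : Sec D), Small s → IsGlobal s
  /-- the intersection `div(s) · Y` -/
  inter : ∀ {D : MDiv}, Sec D → Cyc → Cyc
  inter_dim : ∀ {D : MDiv} (s : Sec D) (Y : Cyc) (k : ℤ), IsDim Y k → IsDim (inter s Y) (k - 1)
  inter_eff : ∀ {D : MDiv} (s : Sec D) (Y : Cyc), IsGlobal s → Eff Y → Eff (inter s Y)
  /-- `div(s_0), …, div(s_{m-1})` intersect `Y` properly -/
  Proper : ∀ {m : ℕ}, (Fin m → Sigma Sec) → Cyc → Prop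
  /-- the local height `h_{D̄_0,…,D̄_{m-1},v}(Y; s_0,…,s_{m-1})` -/
  locH : ∀ {m : ℕ}, (Fin m → Sigma Sec) → Cyc → A.places → ℝ
  /-- the `v`-adic Monge-Ampère integral
  `∫ log‖s‖_v c₁(D̄_0) ∧ ⋯ ∧ c₁(D̄_{m-1}) ∧ δ_{Y_v}` -/
  MAint : ∀ {m : ℕ}, (Fin m → MDiv) → ∀ {D : MDiv}, Sec D → Cyc → A.places → ℝ
  /-- the inductive definition of local heights -/
  locH_rec : ∀ {m : ℕ} (fam : Fin (m + 1) → Sigma Sec) (Y : Cyc) (v : A.places),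
    locH fam Y v =
      locH (fun i : Fin m => fam i.castSucc) (inter (fam (Fin.last m)).2 Y) v -
        MAint (fun i : Fin m => (fam i.castSucc).1) (fam (Fin.last m)).2 Y v
  /-- the local heights of the zero cycle vanish -/
  locH_zero : ∀ {m : ℕ} (fam : Fin m → Sigma Sec) (v : A.places), locH fam 0 v = 0

attribute [instance] HeightTheory.grp

/-- The global height `h_{D̄_0,…,D̄_m}(Y) ∈ ℝ ∪ {±∞}` of a cycle, as the limit
(computed as a `limsup` over finite partial sums) of `∑_v n_v h_{...,v}(Y; s_•)`. -/
def HeightTheory.globalH {K : Type} [Field K] {A : AdelicField K} (T : HeightTheory K A)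
    {m : ℕ} (fam : Fin m → Sigma T.Sec) (Y : T.Cyc) : EReal :=
  Filter.limsup
    (fun S : Finset A.places => ((∑ v ∈ S, A.weight v * T.locH fam Y v : ℝ) : EReal))
    Filter.atTop

/-! ## Heights of 0-cycles attached to a metrized divisor (abstract framework) -/

/-- The data of a metrized divisor `D̄` on a normal projective variety `X` over an
adelic field, as far as `0`-cycles are concerned: the group of `0`-cycles of `X` and
the local heights `h_{D̄,v}(Y; s)` (with respect to a fixed rational section `s` of
`O(D)` regular and non-vanishing on the supports), which vanish for all but finitely
many places. -/
structure ZeroCycleHeightData (K : Type) [CommRing K] (A : AdelicField K) : Type 1 where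
  Cyc : Type
  [grp : AddCommGroup Cyc]
  locH : Cyc → A.places → ℝ
  locH_finite : ∀ Y : Cyc, {v : A.places | locH Y v ≠ 0}.Finite

attribute [instance] ZeroCycleHeightData.grp

/-- The global height `h_{D̄}(Y) = ∑_v n_v h_{D̄,v}(Y; s)` of a `0`-cycle. -/
def ZeroCycleHeightData.globalH {K : Type} [CommRing K] {A : AdelicField K}
    (H : ZeroCycleHeightData K A) (Y : H.Cyc) : ℝ :=
  ∑ᶠ v : A.places, A.weight v * H.locH Y v

/-! ## Intersection theory on a projective variety (abstract framework)

Cycles, Cartier divisors, sections, proper intersection and degrees on a (projective)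
variety over `K` are not available in Mathlib; they are axiomatised by the following
structure. -/
structure IntersectionTheory (K : Type) [Field K] : Type 1 where
  /-- the group of cycles of `X` -/
  Cyc : Type
  [grp : AddCommGroup Cyc]
  /-- `Y` is a cycle of pure dimension `k` -/
  IsDim : Cyc → ℤ → Prop
  /-- effective cycles -/
  Eff : Cyc → Prop
  /-- irreducible subvarieties, viewed as cycles -/
  Irred : Cyc → Prop
  /-- the closed points of `X`, with their Zariski topology -/
  Pt : Type
  [top : TopologicalSpace Pt]
  /-- a closed point as a 0-cycle -/
  pt : Pt → Cyc
  pt_dim : ∀ p, IsDim (pt p) 0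
  /-- the residue degree `[κ(p) : K]` -/
  resDeg : Pt → ℕ
  /-- the coefficient of a closed point in a 0-cycle -/
  coeff : Cyc → Pt → ℤ
  /-- the local ring `O_{p,X}` -/
  LocRing : Pt → Type
  [lrRing : ∀ p, CommRing (LocRing p)]
  [lrAlg : ∀ p, Algebra K (LocRing p)]
  /-- `X` is projective -/
  Projective : Prop
  /-- `X` is Cohen-Macaulay -/
  CohenMacaulay : Prop
  /-- `X` is of pure dimension `d` -/
  PureDim : ℕ → Prop
  /-- the dimension of `X` -/
  dimX : ℕ
  /-- the fundamental cycle `[X]` -/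
  fund : Cyc
  fund_dim : IsDim fund dimX
  fund_eff : Eff fund
  /-- Cartier divisors on `X` -/
  Div : Type
  /-- rational sections of `O(D)` -/
  Sec : Div → Type
  /-- global sections -/
  IsGlobal : ∀ {D : Div}, Sec D → Prop
  /-- a local defining function of `div(s)` at `p`, as a germ in `O_{p,X}` -/
  germ : ∀ {D : Div}, Sec D → ∀ p : Pt, LocRing p
  /-- the support `|div(s)|`, as a set of closed points -/
  SuppDiv : ∀ {D : Div}, Sec D → Set Pt
  /-- the intersection `div(s) · Y` -/
  inter : ∀ {D : Div}, Sec D → Cyc → Cyc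
  inter_dim : ∀ {D : Div} (s : Sec D) (Y : Cyc) (k : ℤ), IsDim Y k → IsDim (inter s Y) (k - 1)
  /-- `div(s_0), …, div(s_{m-1})` intersect `Y` properly -/
  Proper : ∀ {m : ℕ}, (Fin m → Sigma Sec) → Cyc → Prop
  /-- the degree of a 0-cycle: `deg(∑ m_p p) = ∑ m_p [κ(p) : K]` -/
  deg0 : Cyc → ℤ
  deg0_spec : ∀ Y : Cyc, IsDim Y 0 →
    (deg0 Y : ℝ) = ∑ᶠ p : Pt, (coeff Y p : ℝ) * (resDeg p : ℝ)
  /-- the degree `deg_{D_0,…,D_{m-1}}(Y)` of a cycle with respect to divisors -/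
  degD : ∀ {m : ℕ}, (Fin m → Div) → Cyc → ℤ
  degD_zero : ∀ (Ds : Fin 0 → Div) (Y : Cyc), degD Ds Y = deg0 Y
  /-- the inductive definition of degrees via divisors of rational sections meeting the
  cycle properly -/
  degD_rec : ∀ {m : ℕ} (fam : Fin (m + 1) → Sigma Sec) (Y : Cyc),
    Proper (fun _ : Fin 1 => fam (Fin.last m)) Y →
    degD (fun i : Fin (m + 1) => (fam i).1) Y =
      degD (fun i : Fin m => (fam i.castSucc).1) (inter (fam (Fin.last m)).2 Y)
  /-- 0-cycles are effective iff all their coefficients are nonnegative -/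
  eff_zero_iff : ∀ Y : Cyc, IsDim Y 0 → (Eff Y ↔ ∀ p, 0 ≤ coeff Y p)
  /-- a Cartier divisor is nef if it has nonnegative degree on every irreducible
  curve -/
  nef : Div → Prop
  nef_iff : ∀ D : Div, nef D ↔ ∀ C : Cyc, Irred C → IsDim C 1 → 0 ≤ degD ![D] C

attribute [instance] IntersectionTheory.grp IntersectionTheory.top
  IntersectionTheory.lrRing IntersectionTheory.lrAlg

/-- The iterated intersection product `div(s_0) ⋯ div(s_{m-1}) · X`. -/
def IntersectionTheory.iprod {K : Type} [Field K] (T : IntersectionTheory K)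
    {m : ℕ} (fam : Fin m → Sigma T.Sec) : T.Cyc :=
  (List.ofFn fam).foldr (fun s Y => T.inter s.2 Y) T.fund

/-- The metric function of the divisor `Ē` of the hyperplane at infinity of `ℙ^r_K`,
equipped with the `ℓ¹`-norm at Archimedean places and the canonical metric at
non-Archimedean ones (Proposition 5.2). -/
def psiProj {K : Type} [Field K] (A : AdelicField K) (v : A.places) {r : ℕ}
    (y : Fin r → ℝ) : ℝ :=
  if A.IsNonarch v then sInf (insert 0 (Set.range y))
  else - Real.log (1 + ∑ j, Real.exp (-(y j)))

/-- The metric function of the toric metrized divisor `D̄_{m,α}`: the homothecy by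
`|α₀|_v⁻¹` of the inverse image of `Ē` under the monomial map `φ_{m,α}` (formula
(5.4)). -/
def psiPullback {K : Type} [Field K] (A : AdelicField K) {n r : ℕ}
    (m : Fin (r + 1) → Fin n → ℤ) (a : Fin (r + 1) → Kˣ) (v : A.places)
    (u : Fin n → ℝ) : ℝ :=
  - Real.log (A.absv v ↑(a 0)) + (∑ i, ((m 0) i : ℝ) * u i) +
    psiProj A v (fun j : Fin r =>
      ((∑ i, ((m j.succ) i : ℝ) * u i) - (∑ i, ((m 0) i : ℝ) * u i)) -
        Real.log (A.absv v (↑(a j.succ) / ↑(a 0))))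

/-- The explicit formula for the `v`-adic metric function of `D̄_{m,α}` (formula
(5.6)). -/
def psiMonomial {K : Type} [Field K] (A : AdelicField K) (v : A.places) {n r : ℕ}
    (m : Fin (r + 1) → Fin n → ℤ) (a : Fin (r + 1) → Kˣ) (u : Fin n → ℝ) : ℝ :=
  if A.IsNonarch v then
    sInf (Set.range fun j : Fin (r + 1) =>
      (∑ i, (m j i : ℝ) * u i) - Real.log (A.absv v ↑(a j)))
  else
    - Real.log (∑ j : Fin (r + 1), A.absv v ↑(a j) * Real.exp (-(∑ i, (m j i : ℝ) * u i)))

/-- The convex coefficients expressing `x` as a convex combination of the exponents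
`m_j`. -/
def lambdaSet {n r : ℕ} (m : Fin (r + 1) → Fin n → ℤ) (x : Fin n → ℝ) :
    Set (Fin (r + 1) → ℝ) :=
  {l | (∀ j, 0 ≤ l j) ∧ (∑ j, l j) = 1 ∧ ∀ i, (∑ j, l j * (m j i : ℝ)) = x i}

/-- The explicit formula for the `v`-adic roof function of `D̄_{m,α}` (formula (5.7)). -/
def roofMonomial {K : Type} [Field K] (A : AdelicField K) (v : A.places) {n r : ℕ}
    (m : Fin (r + 1) → Fin n → ℤ) (a : Fin (r + 1) → Kˣ) (x : Fin n → ℝ) : ℝ :=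
  if A.IsNonarch v then
    sSup ((fun l : Fin (r + 1) → ℝ =>
      ∑ j, l j * Real.log (A.absv v ↑(a j))) '' lambdaSet m x)
  else
    sSup ((fun l : Fin (r + 1) → ℝ =>
      ∑ j, l j * Real.log (A.absv v ↑(a j) / l j)) '' lambdaSet m x)


/-! ### Auxiliary lemmas -/

namespace ToricAux

variable {k : ℕ}

lemma range_ne (g : Fin (k+1) → ℝ) : (Set.range g).Nonempty := Set.range_nonempty g

lemma sInf_range_le (g : Fin (k+1) → ℝ) (j : Fin (k+1)) : sInf (Set.range g) ≤ g j :=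
  csInf_le (Set.finite_range g).bddBelow ⟨j, rfl⟩

lemma le_sInf_range {g : Fin (k+1) → ℝ} {c : ℝ} (h : ∀ j, c ≤ g j) :
    c ≤ sInf (Set.range g) :=
  le_csInf (range_ne g) (by rintro b ⟨j, rfl⟩; exact h j)

lemma sInf_range_eq {g : Fin (k+1) → ℝ} {j : Fin (k+1)} (h : ∀ i, g j ≤ g i) :
    sInf (Set.range g) = g j :=
  le_antisymm (sInf_range_le g j) (le_sInf_range h)

lemma sSup_range_eq {g : Fin (k+1) → ℝ} {j : Fin (k+1)} (h : ∀ i, g i ≤ g j) :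
    sSup (Set.range g) = g j :=
  IsGreatest.csSup_eq ⟨⟨j, rfl⟩, by rintro b ⟨i, rfl⟩; exact h i⟩

section Main

variable {K : Type} [Field K] (A : AdelicField K) (v : A.places) {n r : ℕ}
  (m : Fin (r + 1) → Fin n → ℤ) (a : Fin (r + 1) → Kˣ)

/-- abbreviation for the linear form -/
private def LF (m : Fin (r + 1) → Fin n → ℤ) (j : Fin (r + 1)) (u : Fin n → ℝ) : ℝ :=
  ∑ i, (m j i : ℝ) * u i

lemma abs_pos (j : Fin (r + 1)) : 0 < A.absv v ↑(a j) :=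
  (A.absv v).pos (Units.ne_zero (a j))

lemma psiPullback_eq (u : Fin n → ℝ) :
    psiPullback A m a v u = psiMonomial A v m a u := by
  classical
  set c : Fin (r + 1) → ℝ := fun j => A.absv v ↑(a j) with hc
  have hcpos : ∀ j, 0 < c j := fun j => abs_pos A v a j
  set L : Fin (r + 1) → ℝ := fun j => ∑ i, (m j i : ℝ) * u i with hL
  have hdiv : ∀ j : Fin r, Real.log (A.absv v (↑(a j.succ) / ↑(a 0)))
      = Real.log (c j.succ) - Real.log (c 0) := by
    intro j
    rw [map_div₀, Real.log_div (ne_of_gt (hcpos j.succ)) (ne_of_gt (hcpos 0))]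
  set y : Fin r → ℝ := fun j => (L j.succ - L 0) - (Real.log (c j.succ) - Real.log (c 0))
    with hy
  have hfun : (fun j : Fin r =>
      ((∑ i, ((m j.succ) i : ℝ) * u i) - (∑ i, ((m 0) i : ℝ) * u i)) -
        Real.log (A.absv v (↑(a j.succ) / ↑(a 0)))) = y := by
    funext j
    rw [hdiv j]
  have hpull : psiPullback A m a v u = - Real.log (c 0) + L 0 + psiProj A v y := by
    rw [psiPullback, hfun]
  by_cases hna : A.IsNonarch v
  · -- non-Archimedean
    rw [hpull, psiProj, psiMonomial, if_pos hna, if_pos hna]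
    set z : Fin (r + 1) → ℝ := fun j => L j - Real.log (c j) with hz
    have hmemz : ∀ j : Fin (r + 1), z j - (- Real.log (c 0) + L 0) ∈
        insert (0:ℝ) (Set.range y) := by
      intro j
      refine Fin.cases ?_ (fun i => ?_) j
      · left; simp [hz]; ring
      · right; exact ⟨i, by simp only [hy, hz]; ring⟩
    have hbdd : BddBelow (insert (0:ℝ) (Set.range y)) :=
      ((Set.finite_range y).insert 0).bddBelow
    have hne : (insert (0:ℝ) (Set.range y)).Nonempty := ⟨0, Set.mem_insert _ _⟩
    apply le_antisymm
    · refine le_sInf_range fun j => ?_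
      have := csInf_le hbdd (hmemz j)
      linarith
    · have h0 : z 0 = L 0 - Real.log (c 0) := rfl
      have h2 : sInf (Set.range z) - (- Real.log (c 0) + L 0) ≤
          sInf (insert (0:ℝ) (Set.range y)) := by
        refine le_csInf hne ?_
        rintro b (rfl | ⟨i, rfl⟩)
        · have := sInf_range_le z 0
          rw [h0] at this
          linarith
        · have h1 := sInf_range_le z i.succ
          have hzi : z i.succ = L i.succ - Real.log (c i.succ) := rfl
          have hyi : y i = L i.succ - L 0 - (Real.log (c i.succ) - Real.log (c 0)) := rfl
          rw [hzi] at h1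
          rw [hyi]
          linarith
      linarith
  · -- Archimedean
    rw [hpull, psiProj, psiMonomial, if_neg hna, if_neg hna]
    have hterm : ∀ j : Fin (r + 1), 0 < c j * Real.exp (-(L j)) :=
      fun j => mul_pos (hcpos j) (Real.exp_pos _)
    have e1 : ∀ j : Fin (r + 1), c j * Real.exp (-(L j)) = Real.exp (Real.log (c j) - L j) := by
      intro j
      rw [Real.exp_sub, Real.exp_log (hcpos j), Real.exp_neg, div_eq_mul_inv]
    have hy' : ∀ j : Fin r, Real.exp (-(y j)) =
        (c j.succ * Real.exp (-(L j.succ))) / (c 0 * Real.exp (-(L 0))) := by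
      intro j
      rw [e1, e1, ← Real.exp_sub]
      congr 1
      have hyj : y j = L j.succ - L 0 - (Real.log (c j.succ) - Real.log (c 0)) := rfl
      rw [hyj]
      ring
    have key : (c 0 * Real.exp (-(L 0))) * (1 + ∑ j : Fin r, Real.exp (-(y j)))
        = ∑ j : Fin (r + 1), c j * Real.exp (-(L j)) := by
      rw [Fin.sum_univ_succ, mul_add, mul_one, Finset.mul_sum]
      congr 1
      refine Finset.sum_congr rfl fun j _ => ?_
      rw [hy' j, mul_comm, div_mul_cancel₀ _ (ne_of_gt (hterm 0))]
    have h1p : (0:ℝ) < 1 + ∑ j : Fin r, Real.exp (-(y j)) := by positivity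
    have hlogT : Real.log (c 0 * Real.exp (-(L 0))) = Real.log (c 0) - L 0 := by
      rw [Real.log_mul (ne_of_gt (hcpos 0)) (Real.exp_ne_zero _), Real.log_exp]
      ring
    rw [← key, Real.log_mul (ne_of_gt (hterm 0)) (ne_of_gt h1p), hlogT]
    ring

lemma psiMonomial_le (u : Fin n → ℝ) (j : Fin (r + 1)) :
    psiMonomial A v m a u ≤ (∑ i, (m j i : ℝ) * u i) - Real.log (A.absv v ↑(a j)) := by
  by_cases hna : A.IsNonarch v
  · rw [psiMonomial, if_pos hna]
    exact sInf_range_le _ j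
  · rw [psiMonomial, if_neg hna]
    have hcpos : ∀ i, 0 < A.absv v ↑(a i) := fun i => abs_pos A v a i
    have hterm : ∀ i : Fin (r + 1),
        0 < A.absv v ↑(a i) * Real.exp (-(∑ t, (m i t : ℝ) * u t)) :=
      fun i => mul_pos (hcpos i) (Real.exp_pos _)
    have hle : A.absv v ↑(a j) * Real.exp (-(∑ t, (m j t : ℝ) * u t)) ≤
        ∑ i : Fin (r + 1), A.absv v ↑(a i) * Real.exp (-(∑ t, (m i t : ℝ) * u t)) :=
      Finset.single_le_sum (fun i _ => (hterm i).le) (Finset.mem_univ j)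
    have hlog := Real.log_le_log (hterm j) hle
    rw [Real.log_mul (ne_of_gt (hcpos j)) (Real.exp_ne_zero _), Real.log_exp] at hlog
    linarith

/-- softmax identity -/
lemma softmax_eq (t : Fin (k+1) → ℝ) :
    ∑ j, (Real.exp (t j) / (∑ i, Real.exp (t i))) *
      (t j - Real.log (Real.exp (t j) / (∑ i, Real.exp (t i)))) =
    Real.log (∑ i, Real.exp (t i)) := by
  have hS : (0:ℝ) < ∑ i, Real.exp (t i) :=
    Finset.sum_pos (fun i _ => Real.exp_pos _) Finset.univ_nonempty
  have h1 : ∀ j, Real.log (Real.exp (t j) / (∑ i, Real.exp (t i)))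
      = t j - Real.log (∑ i, Real.exp (t i)) := by
    intro j
    rw [Real.log_div (Real.exp_ne_zero _) (ne_of_gt hS), Real.log_exp]
  calc ∑ j, (Real.exp (t j) / (∑ i, Real.exp (t i))) *
      (t j - Real.log (Real.exp (t j) / (∑ i, Real.exp (t i))))
      = ∑ j, (Real.exp (t j) / (∑ i, Real.exp (t i))) * Real.log (∑ i, Real.exp (t i)) := by
        refine Finset.sum_congr rfl fun j _ => ?_
        rw [h1 j]; ring_nf
    _ = (∑ j, Real.exp (t j) / (∑ i, Real.exp (t i))) * Real.log (∑ i, Real.exp (t i)) := by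
        rw [Finset.sum_mul]
    _ = Real.log (∑ i, Real.exp (t i)) := by
        rw [← Finset.sum_div, div_self (ne_of_gt hS), one_mul]

/-- Gibbs inequality -/
lemma gibbs (t l : Fin (k+1) → ℝ) (hl : ∀ j, 0 ≤ l j) (hs : ∑ j, l j = 1) :
    ∑ j, l j * (t j - Real.log (l j)) ≤ Real.log (∑ j, Real.exp (t j)) := by
  classical
  set T : Finset (Fin (k+1)) := Finset.univ.filter (fun j => l j ≠ 0) with hT
  have hsT : ∑ j ∈ T, l j = 1 := by
    rw [hT, Finset.sum_filter_ne_zero]; exact hs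
  have hTpos : ∀ j ∈ T, 0 < l j := by
    intro j hj
    rcases (hl j).lt_or_eq with h | h
    · exact h
    · exact absurd h.symm (by simpa [hT] using hj)
  have hTne : T.Nonempty := by
    by_contra hc
    rw [Finset.not_nonempty_iff_eq_empty] at hc
    rw [hc, Finset.sum_empty] at hsT
    norm_num at hsT
  have hlog : ConcaveOn ℝ (Set.Ioi (0:ℝ)) Real.log := strictConcaveOn_log_Ioi.concaveOn
  have hz : ∀ j ∈ T, Real.exp (t j) / l j ∈ Set.Ioi (0:ℝ) := fun j hj =>
    div_pos (Real.exp_pos _) (hTpos j hj)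
  have jensen := hlog.le_map_sum (t := T) (w := l) (p := fun j => Real.exp (t j) / l j)
    (fun j _ => hl j) hsT hz
  have hcenter : (∑ j ∈ T, l j • (Real.exp (t j) / l j)) = ∑ j ∈ T, Real.exp (t j) := by
    refine Finset.sum_congr rfl fun j hj => ?_
    rw [smul_eq_mul, mul_div_cancel₀ _ (ne_of_gt (hTpos j hj))]
  have hLHS : ∑ j, l j * (t j - Real.log (l j))
      = ∑ j ∈ T, l j • Real.log (Real.exp (t j) / l j) := by
    rw [← Finset.sum_subset (Finset.subset_univ T)
      (fun j _ hj => by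
        have : l j = 0 := by simpa [hT] using hj
        simp [this])]
    refine Finset.sum_congr rfl fun j hj => ?_
    rw [smul_eq_mul, Real.log_div (Real.exp_ne_zero _) (ne_of_gt (hTpos j hj)), Real.log_exp]
  rw [hLHS]
  refine jensen.trans ?_
  rw [hcenter]
  apply Real.log_le_log (Finset.sum_pos (fun j _ => Real.exp_pos _) hTne)
  exact Finset.sum_le_sum_of_subset_of_nonneg (Finset.subset_univ T)
    (fun j _ _ => (Real.exp_pos _).le)

lemma lin_comb (u w : Fin n → ℝ) (p q : ℝ) (j : Fin (r + 1)) :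
    (∑ i, (m j i : ℝ) * (p • u + q • w) i)
      = p * (∑ i, (m j i : ℝ) * u i) + q * (∑ i, (m j i : ℝ) * w i) := by
  rw [Finset.mul_sum, Finset.mul_sum, ← Finset.sum_add_distrib]
  refine Finset.sum_congr rfl fun i _ => ?_
  simp only [Pi.add_apply, Pi.smul_apply, smul_eq_mul]
  ring

lemma psiMonomial_concave : ConcaveOn ℝ Set.univ (psiMonomial A v m a) := by
  classical
  refine ⟨convex_univ, ?_⟩
  intro u _ w _ p q hp hq hpq
  simp only [smul_eq_mul]
  have hcpos : ∀ i, 0 < A.absv v ↑(a i) := fun i => abs_pos A v a i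
  by_cases hna : A.IsNonarch v
  · simp only [psiMonomial, if_pos hna]
    refine le_sInf_range fun j => ?_
    have h1 := sInf_range_le (fun j : Fin (r+1) =>
      (∑ i, (m j i : ℝ) * u i) - Real.log (A.absv v ↑(a j))) j
    have h2 := sInf_range_le (fun j : Fin (r+1) =>
      (∑ i, (m j i : ℝ) * w i) - Real.log (A.absv v ↑(a j))) j
    have h3 := lin_comb m u w p q j
    have h4 := mul_le_mul_of_nonneg_left h1 hp
    have h5 := mul_le_mul_of_nonneg_left h2 hq
    have : p * Real.log (A.absv v ↑(a j)) + q * Real.log (A.absv v ↑(a j))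
        = Real.log (A.absv v ↑(a j)) := by
      rw [← add_mul, hpq, one_mul]
    nlinarith [h4, h5]
  · simp only [psiMonomial, if_neg hna]
    set c : Fin (r + 1) → ℝ := fun j => A.absv v ↑(a j) with hc
    have e1 : ∀ (z : Fin n → ℝ) (j : Fin (r + 1)),
        c j * Real.exp (-(∑ i, (m j i : ℝ) * z i))
          = Real.exp (Real.log (c j) - (∑ i, (m j i : ℝ) * z i)) := by
      intro z j
      rw [Real.exp_sub, Real.exp_log (hcpos j), Real.exp_neg, div_eq_mul_inv]
    have hsum : ∀ z : Fin n → ℝ,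
        (∑ j : Fin (r+1), c j * Real.exp (-(∑ i, (m j i : ℝ) * z i)))
          = ∑ j : Fin (r+1), Real.exp (Real.log (c j) - (∑ i, (m j i : ℝ) * z i)) :=
      fun z => Finset.sum_congr rfl fun j _ => e1 z j
    set tu : Fin (r+1) → ℝ := fun j => Real.log (c j) - (∑ i, (m j i : ℝ) * u i) with htu
    set tw : Fin (r+1) → ℝ := fun j => Real.log (c j) - (∑ i, (m j i : ℝ) * w i) with htw
    set tc : Fin (r+1) → ℝ := fun j =>
      Real.log (c j) - (∑ i, (m j i : ℝ) * (p • u + q • w) i) with htc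
    have htc' : ∀ j, tc j = p * tu j + q * tw j := by
      intro j
      have h3 := lin_comb m u w p q j
      have : p * Real.log (c j) + q * Real.log (c j) = Real.log (c j) := by
        rw [← add_mul, hpq, one_mul]
      simp only [htc, htu, htw]
      rw [h3]; ring_nf; linarith [this]
    rw [hsum u, hsum w, hsum (p • u + q • w)]
    have hSc : (0:ℝ) < ∑ j : Fin (r+1), Real.exp (tc j) :=
      Finset.sum_pos (fun j _ => Real.exp_pos _) Finset.univ_nonempty
    set lam : Fin (r+1) → ℝ := fun j => Real.exp (tc j) / (∑ i, Real.exp (tc i)) with hlam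
    have hlam0 : ∀ j, 0 ≤ lam j := fun j => (div_pos (Real.exp_pos _) hSc).le
    have hlam1 : ∑ j, lam j = 1 := by
      rw [hlam, ← Finset.sum_div, div_self (ne_of_gt hSc)]
    have hsm := softmax_eq (k := r) tc
    have hgu := gibbs (k := r) tu lam hlam0 hlam1
    have hgw := gibbs (k := r) tw lam hlam0 hlam1
    have hsplit : ∑ j, lam j * (tc j - Real.log (lam j))
        = p * (∑ j, lam j * (tu j - Real.log (lam j)))
          + q * (∑ j, lam j * (tw j - Real.log (lam j))) := by
      rw [Finset.mul_sum, Finset.mul_sum, ← Finset.sum_add_distrib]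
      refine Finset.sum_congr rfl fun j _ => ?_
      rw [htc' j]
      have hx : p + q - 1 = 0 := by linarith
      linear_combination (lam j * Real.log (lam j)) * hx
    have : Real.log (∑ j, Real.exp (tc j))
        ≤ p * Real.log (∑ j, Real.exp (tu j)) + q * Real.log (∑ j, Real.exp (tw j)) := by
      rw [← hsm, hsplit]
      have h4 := mul_le_mul_of_nonneg_left hgu hp
      have h5 := mul_le_mul_of_nonneg_left hgw hq
      linarith
    linarith

lemma exp_psiMonomial {F : Type} [Field F] [Algebra K F] (W : AbsoluteValue F ℝ)
    (hcompat : ∀ x : K, W (algebraMap K F x) = A.absv v x) (p : Fin n → Fˣ) :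
    Real.exp (psiMonomial A v m a (valVec W fun i => ((p i : F)))) =
      (if A.IsNonarch v then
        sSup (Set.range fun j : Fin (r + 1) =>
          W (algebraMap K F ↑(a j) * ((∏ i, p i ^ m j i : Fˣ) : F)))
      else
        ∑ j : Fin (r + 1),
          W (algebraMap K F ↑(a j) * ((∏ i, p i ^ m j i : Fˣ) : F)))⁻¹ := by
  classical
  set u : Fin n → ℝ := valVec W fun i => ((p i : F)) with hu
  have hppos : ∀ i, 0 < W ((p i : F)) := fun i => W.pos (Units.ne_zero (p i))
  have hcoe : ∀ j : Fin (r + 1), ((∏ i, p i ^ m j i : Fˣ) : F)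
      = ∏ i, ((p i : F)) ^ (m j i) := by
    intro j
    calc ((∏ i, p i ^ m j i : Fˣ) : F) = (Units.coeHom F) (∏ i, p i ^ m j i) := rfl
      _ = ∏ i, (Units.coeHom F) (p i ^ m j i) := map_prod _ _ _
      _ = ∏ i, ((p i : F)) ^ m j i :=
          Finset.prod_congr rfl fun i _ => Units.val_zpow_eq_zpow_val _ _
  have hprod : ∀ j : Fin (r + 1), W ((∏ i, p i ^ m j i : Fˣ) : F)
      = ∏ i, W ((p i : F)) ^ (m j i) := by
    intro j
    rw [hcoe j, map_prod]
    exact Finset.prod_congr rfl fun i _ => map_zpow₀ W _ _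
  have hval : ∀ j : Fin (r + 1), Real.exp (-(∑ i, (m j i : ℝ) * u i))
      = W ((∏ i, p i ^ m j i : Fˣ) : F) := by
    intro j
    have hsum : -(∑ i, (m j i : ℝ) * u i) = ∑ i, (m j i : ℝ) * Real.log (W ((p i : F))) := by
      simp only [hu, valVec, mul_neg, Finset.sum_neg_distrib, neg_neg]
    rw [hsum, Real.exp_sum, hprod j]
    refine Finset.prod_congr rfl fun i _ => ?_
    rw [mul_comm, ← Real.rpow_def_of_pos (hppos i), Real.rpow_intCast]
  set Wf : Fin (r + 1) → ℝ := fun j =>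
    W (algebraMap K F ↑(a j) * ((∏ i, p i ^ m j i : Fˣ) : F)) with hWf
  have hane : ∀ j : Fin (r + 1), (algebraMap K F ↑(a j)) ≠ 0 := by
    intro j h
    exact Units.ne_zero (a j) ((algebraMap K F).injective (by rw [h, map_zero]))
  have hprodne : ∀ j : Fin (r + 1), ((∏ i, p i ^ m j i : Fˣ) : F) ≠ 0 :=
    fun j => Units.ne_zero _
  have hWfpos : ∀ j, 0 < Wf j := fun j => W.pos (mul_ne_zero (hane j) (hprodne j))
  have hWmul : ∀ j : Fin (r + 1),
      Wf j = A.absv v ↑(a j) * W ((∏ i, p i ^ m j i : Fˣ) : F) := by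
    intro j
    rw [hWf]
    simp only
    rw [map_mul, hcompat]
  by_cases hna : A.IsNonarch v
  · rw [psiMonomial, if_pos hna, if_pos hna]
    have hz : (fun j : Fin (r + 1) =>
        (∑ i, (m j i : ℝ) * u i) - Real.log (A.absv v ↑(a j)))
        = fun j => - Real.log (Wf j) := by
      funext j
      have h1 : Real.log (W ((∏ i, p i ^ m j i : Fˣ) : F)) = -(∑ i, (m j i : ℝ) * u i) := by
        rw [← hval j, Real.log_exp]
      rw [hWmul j, Real.log_mul (ne_of_gt ((A.absv v).pos (Units.ne_zero (a j))))
        (ne_of_gt (W.pos (hprodne j))), h1]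
      ring
    obtain ⟨j0, hj0⟩ := Finite.exists_max Wf
    rw [hz, sInf_range_eq (j := j0) (fun i => neg_le_neg (Real.log_le_log (hWfpos i) (hj0 i))),
      sSup_range_eq (j := j0) hj0, Real.exp_neg, Real.exp_log (hWfpos j0)]
  · rw [psiMonomial, if_neg hna, if_neg hna]
    have hsum : (∑ j : Fin (r + 1), A.absv v ↑(a j) * Real.exp (-(∑ i, (m j i : ℝ) * u i)))
        = ∑ j : Fin (r + 1), Wf j := by
      refine Finset.sum_congr rfl fun j _ => ?_
      rw [hval j, hWmul j]
    rw [hsum, Real.exp_neg, Real.exp_log (Finset.sum_pos (fun j _ => hWfpos j)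
      Finset.univ_nonempty)]

/-! ### Convex-hull extraction helpers -/

lemma hull_extract {E' : Type} [AddCommGroup E'] [Module ℝ E'] (v' : Fin (r + 1) → E')
    {z : E'} (hz : z ∈ convexHull ℝ (Set.range v')) :
    ∃ l : Fin (r + 1) → ℝ, (∀ j, 0 ≤ l j) ∧ (∑ j, l j) = 1 ∧ (∑ j, l j • v' j) = z := by
  classical
  rw [convexHull_range_eq_exists_affineCombination] at hz
  obtain ⟨s, w, hw0, hw1, hcomb⟩ := hz
  refine ⟨fun j => if j ∈ s then w j else 0, fun j => ?_, ?_, ?_⟩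
  · by_cases hj : j ∈ s
    · simpa [hj] using hw0 j hj
    · simp [hj]
  · rw [Finset.sum_ite_mem, Finset.univ_inter, hw1]
  · rw [← hcomb, Finset.affineCombination_eq_linear_combination s v' w hw1]
    rw [← Finset.sum_subset (Finset.subset_univ s) (fun j _ hj => by simp [hj])]
    exact Finset.sum_congr rfl fun j hj => by simp [hj]

lemma hull_include {E' : Type} [AddCommGroup E'] [Module ℝ E'] (v' : Fin (r + 1) → E')
    {l : Fin (r + 1) → ℝ} (hl0 : ∀ j, 0 ≤ l j) (hl1 : ∑ j, l j = 1) :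
    (∑ j, l j • v' j) ∈ convexHull ℝ (Set.range v') := by
  rw [← Finset.centerMass_eq_of_sum_1 _ _ hl1]
  exact Finset.centerMass_mem_convexHull _ (fun j _ => hl0 j) (by rw [hl1]; norm_num)
    (fun j _ => Set.mem_range_self j)

lemma exists_lambda {x : Fin n → ℝ}
    (hx : x ∈ convexHull ℝ (Set.range fun j => toRealVec (m j))) :
    (lambdaSet m x).Nonempty := by
  obtain ⟨l, hl0, hl1, hl2⟩ := hull_extract (fun j => toRealVec (m j)) hx
  refine ⟨l, hl0, hl1, fun i => ?_⟩
  have := congrFun hl2 i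
  rw [Finset.sum_apply] at this
  simpa [toRealVec] using this

lemma sum_swap_lin {l : Fin (r + 1) → ℝ} {x : Fin n → ℝ}
    (hl : ∀ i, (∑ j, l j * (m j i : ℝ)) = x i) (u : Fin n → ℝ) :
    ∑ j, l j * (∑ i, (m j i : ℝ) * u i) = ∑ i, x i * u i := by
  calc ∑ j, l j * (∑ i, (m j i : ℝ) * u i)
      = ∑ j, ∑ i, (l j * (m j i : ℝ)) * u i := by
        refine Finset.sum_congr rfl fun j _ => ?_
        rw [Finset.mul_sum]
        exact Finset.sum_congr rfl fun i _ => by ring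
    _ = ∑ i, ∑ j, (l j * (m j i : ℝ)) * u i := Finset.sum_comm
    _ = ∑ i, x i * u i := by
        refine Finset.sum_congr rfl fun i _ => ?_
        rw [← Finset.sum_mul, hl i]

/-! ### Compactness of the simplex and of `lambdaSet` -/

lemma simplex_closed :
    IsClosed {l : Fin (r + 1) → ℝ | (∀ j, 0 ≤ l j) ∧ ∑ j, l j = 1} := by
  have : {l : Fin (r + 1) → ℝ | (∀ j, 0 ≤ l j) ∧ ∑ j, l j = 1}
      = (⋂ j, (fun l : Fin (r + 1) → ℝ => l j) ⁻¹' Set.Ici 0) ∩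
        ((fun l : Fin (r + 1) → ℝ => ∑ j, l j) ⁻¹' {1}) := by
    ext l
    simp [Set.mem_iInter]
  rw [this]
  exact IsClosed.inter (isClosed_iInter fun j => isClosed_Ici.preimage (continuous_apply j))
    (isClosed_singleton.preimage (continuous_finset_sum _ fun j _ => continuous_apply j))

lemma simplex_bounded :
    Bornology.IsBounded {l : Fin (r + 1) → ℝ | (∀ j, 0 ≤ l j) ∧ ∑ j, l j = 1} := by
  refine (Metric.isBounded_closedBall (x := (0 : Fin (r + 1) → ℝ)) (r := 1)).subset ?_
  intro l hl
  rw [Metric.mem_closedBall, dist_zero_right]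
  rw [pi_norm_le_iff_of_nonneg zero_le_one]
  intro i
  rw [Real.norm_eq_abs, abs_le]
  constructor
  · linarith [hl.1 i]
  · calc l i ≤ ∑ j, l j := Finset.single_le_sum (fun j _ => hl.1 j) (Finset.mem_univ i)
      _ = 1 := hl.2

lemma simplex_compact :
    IsCompact {l : Fin (r + 1) → ℝ | (∀ j, 0 ≤ l j) ∧ ∑ j, l j = 1} :=
  Metric.isCompact_of_isClosed_isBounded simplex_closed simplex_bounded

lemma lambdaSet_closed (x : Fin n → ℝ) : IsClosed (lambdaSet m x) := by
  have : lambdaSet m x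
      = ((⋂ j, (fun l : Fin (r + 1) → ℝ => l j) ⁻¹' Set.Ici 0) ∩
          ((fun l : Fin (r + 1) → ℝ => ∑ j, l j) ⁻¹' {1})) ∩
        (⋂ i, (fun l : Fin (r + 1) → ℝ => ∑ j, l j * (m j i : ℝ)) ⁻¹' {x i}) := by
    ext l
    simp [lambdaSet, Set.mem_iInter]
    tauto
  rw [this]
  refine IsClosed.inter (IsClosed.inter (isClosed_iInter fun j =>
    isClosed_Ici.preimage (continuous_apply j))
    (isClosed_singleton.preimage (continuous_finset_sum _ fun j _ => continuous_apply j))) ?_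
  exact isClosed_iInter fun i => isClosed_singleton.preimage
    (continuous_finset_sum _ fun j _ => (continuous_apply j).mul continuous_const)

lemma lambdaSet_compact (x : Fin n → ℝ) : IsCompact (lambdaSet m x) :=
  IsCompact.of_isClosed_subset simplex_compact (lambdaSet_closed m x)
    (fun l hl => ⟨hl.1, hl.2.1⟩)

/-! ### pointwise log identities -/

lemma phi_eq {cj t : ℝ} (hc : 0 < cj) (ht : 0 ≤ t) :
    t * Real.log (cj / t) = t * Real.log cj + Real.negMulLog t := by
  rcases ht.eq_or_lt with h | h
  · simp [← h]
  · rw [Real.log_div (ne_of_gt hc) (ne_of_gt h), Real.negMulLog]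
    ring

lemma term_split {cj t LL : ℝ} (hc : 0 < cj) (ht : 0 ≤ t) :
    t * ((Real.log cj - LL) - Real.log t) = t * Real.log (cj / t) - t * LL := by
  rcases ht.eq_or_lt with h | h
  · simp [← h]
  · rw [Real.log_div (ne_of_gt hc) (ne_of_gt h)]
    ring

/-! ### Separation -/

lemma sep_core {x : Fin n → ℝ} {θ ε : ℝ} (hε : 0 < ε)
    (D : Set ((Fin n → ℝ) × ℝ)) (hconv : Convex ℝ D) (hclosed : IsClosed D)
    (hmem : (x, θ) ∈ D) (hnmem : (x, θ + ε) ∉ D) :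
    ∃ uvec : Fin n → ℝ, ∀ y : Fin n → ℝ, ∀ t : ℝ, (y, t) ∈ D →
      t - (∑ i, y i * uvec i) < θ + ε - (∑ i, x i * uvec i) := by
  classical
  obtain ⟨f, β, hsep1, hsep2⟩ := geometric_hahn_banach_closed_point hconv hclosed hnmem
  set s : ℝ := f ((0 : Fin n → ℝ), (1 : ℝ)) with hsdef
  have hft : ∀ (y : Fin n → ℝ) (t : ℝ), f (y, t) = f (y, 0) + t * s := by
    intro y t
    have hsplit : ((y, t) : (Fin n → ℝ) × ℝ)
        = (y, 0) + t • (((0 : Fin n → ℝ), (1 : ℝ)) : (Fin n → ℝ) × ℝ) := by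
      rw [Prod.smul_mk, smul_zero, smul_eq_mul, mul_one, Prod.mk_add_mk, add_zero, zero_add]
    rw [hsplit, map_add, map_smul, smul_eq_mul]
  have hs : 0 < s := by
    have h1 : f (x, θ) < β := hsep1 _ hmem
    have h2 : β < f (x, θ + ε) := hsep2
    have h3 : f (x, θ + ε) = f (x, 0) + (θ + ε) * s := hft x (θ + ε)
    have h4 : f (x, θ) = f (x, 0) + θ * s := hft x θ
    nlinarith
  set uvec : Fin n → ℝ := fun i => -(f (Pi.single i 1, 0)) / s with huvec
  have hflin : ∀ y : Fin n → ℝ, f (y, 0) = -s * (∑ i, y i * uvec i) := by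
    intro y
    have hy : ((y, (0 : ℝ)) : (Fin n → ℝ) × ℝ)
        = ∑ i, y i • (((Pi.single i 1 : Fin n → ℝ), (0 : ℝ)) : (Fin n → ℝ) × ℝ) := by
      apply Prod.ext
      · rw [Prod.fst_sum]
        funext j
        rw [Finset.sum_apply]
        simp [Pi.single_apply]
      · rw [Prod.snd_sum]
        simp
    rw [hy, map_sum, Finset.mul_sum]
    refine Finset.sum_congr rfl fun i _ => ?_
    rw [map_smul, smul_eq_mul, huvec]
    simp only
    have hs' : s ≠ 0 := ne_of_gt hs
    field_simp
  refine ⟨uvec, fun y t hyt => ?_⟩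
  have h1 : f (y, t) < β := hsep1 _ hyt
  have h2 : β < f (x, θ + ε) := hsep2
  rw [hft, hflin] at h1 h2
  have hkey : s * (t - ∑ i, y i * uvec i) < s * (θ + ε - ∑ i, x i * uvec i) := by
    ring_nf
    ring_nf at h1 h2
    linarith
  exact (mul_lt_mul_iff_right₀ hs).mp hkey

lemma legendre_nonarch (hna : A.IsNonarch v) {x : Fin n → ℝ}
    (hx : x ∈ convexHull ℝ (Set.range fun j => toRealVec (m j))) :
    legendreDualFn (psiMonomial A v m a) x =
      sSup ((fun l : Fin (r + 1) → ℝ =>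
        ∑ j, l j * Real.log (A.absv v ↑(a j))) '' lambdaSet m x) := by
  classical
  set clog : Fin (r + 1) → ℝ := fun j => Real.log (A.absv v ↑(a j)) with hclog
  set g : (Fin (r + 1) → ℝ) → ℝ := fun l => ∑ j, l j * clog j with hg
  set Λ := lambdaSet m x with hΛ
  have hΛne : Λ.Nonempty := exists_lambda m hx
  obtain ⟨lst, hlstΛ, hlstmax⟩ := (lambdaSet_compact m x).exists_isMaxOn hΛne
    ((continuous_finset_sum _ fun j _ =>
      (continuous_apply j).mul continuous_const).continuousOn)
  set θ := sSup (g '' Λ) with hθdef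
  have hθ : θ = g lst := IsGreatest.csSup_eq
    ⟨⟨lst, hlstΛ, rfl⟩, by rintro b ⟨l, hl, rfl⟩; exact hlstmax hl⟩
  have hobj_mem : ∀ (uu : Fin n → ℝ) (l : Fin (r + 1) → ℝ), l ∈ Λ →
      g l ≤ (∑ i, x i * uu i) - psiMonomial A v m a uu := by
    intro uu l hl
    rw [psiMonomial, if_pos hna]
    set z : Fin (r + 1) → ℝ := fun j => (∑ i, (m j i : ℝ) * uu i) - clog j with hz
    have h1 : sInf (Set.range z) ≤ ∑ j, l j * z j :=
      calc sInf (Set.range z) = ∑ j, l j * sInf (Set.range z) := by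
            rw [← Finset.sum_mul, hl.2.1, one_mul]
        _ ≤ ∑ j, l j * z j := Finset.sum_le_sum fun j _ =>
            mul_le_mul_of_nonneg_left (sInf_range_le z j) (hl.1 j)
    have h3 : ∑ j, l j * z j = (∑ i, x i * uu i) - g l := by
      calc ∑ j, l j * z j
          = ∑ j, (l j * (∑ i, (m j i : ℝ) * uu i) - l j * clog j) :=
            Finset.sum_congr rfl fun j _ => by rw [hz]; ring
        _ = (∑ j, l j * (∑ i, (m j i : ℝ) * uu i)) - ∑ j, l j * clog j :=
            Finset.sum_sub_distrib _ _
        _ = (∑ i, x i * uu i) - g l := by rw [sum_swap_lin m hl.2.2 uu, hg]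
    linarith
  have hupper : ∀ ε : ℝ, 0 < ε → ∃ uu : Fin n → ℝ,
      (∑ i, x i * uu i) - psiMonomial A v m a uu < θ + ε := by
    intro ε hε
    set P := convexHull ℝ (Set.range fun j =>
      ((toRealVec (m j), clog j) : (Fin n → ℝ) × ℝ)) with hP
    have hPclosed : IsClosed P := ((Set.finite_range _).isCompact_convexHull (𝕜 := ℝ)).isClosed
    have hmemθ : (x, θ) ∈ P := by
      have hsum : (∑ j, lst j • ((toRealVec (m j), clog j) : (Fin n → ℝ) × ℝ))
          = (x, θ) := by
        apply Prod.ext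
        · rw [Prod.fst_sum]
          funext i
          rw [Finset.sum_apply]
          have h := hlstΛ.2.2 i
          simpa [toRealVec] using h
        · rw [Prod.snd_sum, hθ, hg]
          simp [smul_eq_mul]
      rw [← hsum]
      exact hull_include _ hlstΛ.1 hlstΛ.2.1
    have hnmem : (x, θ + ε) ∉ P := by
      intro hmem'
      obtain ⟨l, hl0, hl1, hl2⟩ := hull_extract _ hmem'
      have hfst : ∀ i, (∑ j, l j * (m j i : ℝ)) = x i := by
        intro i
        have h := congrArg Prod.fst hl2
        rw [Prod.fst_sum] at h
        have h2 := congrFun h i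
        rw [Finset.sum_apply] at h2
        simpa [toRealVec] using h2
      have hsnd : ∑ j, l j * clog j = θ + ε := by
        have h := congrArg Prod.snd hl2
        rw [Prod.snd_sum] at h
        simpa [smul_eq_mul] using h
      have hlΛ : l ∈ Λ := ⟨hl0, hl1, hfst⟩
      have h4 : g l ≤ g lst := hlstmax hlΛ
      rw [← hθ] at h4
      have : g l = θ + ε := hsnd
      linarith
    obtain ⟨uvec, hsep⟩ := sep_core hε P (convex_convexHull ℝ _) hPclosed hmemθ hnmem
    refine ⟨uvec, ?_⟩
    obtain ⟨j0, hj0⟩ := Finite.exists_min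
      (fun j : Fin (r + 1) => (∑ i, (m j i : ℝ) * uvec i) - clog j)
    have hpsi : psiMonomial A v m a uvec = (∑ i, (m j0 i : ℝ) * uvec i) - clog j0 := by
      rw [psiMonomial, if_pos hna]
      exact sInf_range_eq hj0
    have hPj : ((toRealVec (m j0), clog j0) : (Fin n → ℝ) × ℝ) ∈ P :=
      subset_convexHull ℝ _ (Set.mem_range_self j0)
    have hs := hsep _ _ hPj
    have htoReal : (∑ i, toRealVec (m j0) i * uvec i) = ∑ i, (m j0 i : ℝ) * uvec i := rfl
    rw [htoReal] at hs
    rw [hpsi]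
    linarith
  rw [legendreDualFn]
  have hlb : ∀ b ∈ Set.range (fun u : Fin n → ℝ =>
      (∑ i, x i * u i) - psiMonomial A v m a u), θ ≤ b := by
    rintro b ⟨uu, rfl⟩
    exact csSup_le (hΛne.image g) (by rintro val ⟨l, hl, rfl⟩; exact hobj_mem uu l hl)
  apply le_antisymm
  · by_contra hlt
    push_neg at hlt
    obtain ⟨uu, huu⟩ := hupper (sInf (Set.range fun u : Fin n → ℝ =>
      (∑ i, x i * u i) - psiMonomial A v m a u) - θ) (by linarith)
    have hle : sInf (Set.range fun u : Fin n → ℝ =>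
        (∑ i, x i * u i) - psiMonomial A v m a u)
          ≤ (∑ i, x i * uu i) - psiMonomial A v m a uu :=
      csInf_le ⟨θ, hlb⟩ ⟨uu, rfl⟩
    linarith
  · exact le_csInf (Set.range_nonempty _) hlb

lemma legendre_arch (hna : ¬ A.IsNonarch v) {x : Fin n → ℝ}
    (hx : x ∈ convexHull ℝ (Set.range fun j => toRealVec (m j))) :
    legendreDualFn (psiMonomial A v m a) x =
      sSup ((fun l : Fin (r + 1) → ℝ =>
        ∑ j, l j * Real.log (A.absv v ↑(a j) / l j)) '' lambdaSet m x) := by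
  classical
  set c : Fin (r + 1) → ℝ := fun j => A.absv v ↑(a j) with hcdef
  have hcpos : ∀ j, 0 < c j := fun j => abs_pos A v a j
  set g : (Fin (r + 1) → ℝ) → ℝ := fun l => ∑ j, l j * Real.log (c j / l j) with hg
  set H : (Fin (r + 1) → ℝ) → ℝ :=
    fun l => ∑ j, (l j * Real.log (c j) + Real.negMulLog (l j)) with hH
  have hgH : ∀ l : Fin (r + 1) → ℝ, (∀ j, 0 ≤ l j) → g l = H l := by
    intro l hl
    exact Finset.sum_congr rfl fun j _ => phi_eq (hcpos j) (hl j)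
  have hHcont : Continuous H := continuous_finset_sum _ fun j _ =>
    ((continuous_apply j).mul continuous_const).add
      (Real.continuous_negMulLog.comp (continuous_apply j))
  set Λ := lambdaSet m x with hΛ
  have hΛne : Λ.Nonempty := exists_lambda m hx
  obtain ⟨lst, hlstΛ, hlstmax'⟩ :=
    (lambdaSet_compact m x).exists_isMaxOn hΛne hHcont.continuousOn
  have hlstmax : ∀ l ∈ Λ, g l ≤ g lst := by
    intro l hl
    rw [hgH l hl.1, hgH lst hlstΛ.1]
    exact hlstmax' hl
  set θ := sSup (g '' Λ) with hθdef
  have hθ : θ = g lst := IsGreatest.csSup_eq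
    ⟨⟨lst, hlstΛ, rfl⟩, by rintro b ⟨l, hl, rfl⟩; exact hlstmax l hl⟩
  have he1 : ∀ uu : Fin n → ℝ,
      (∑ j : Fin (r + 1), c j * Real.exp (-(∑ i, (m j i : ℝ) * uu i)))
        = ∑ j : Fin (r + 1), Real.exp (Real.log (c j) - (∑ i, (m j i : ℝ) * uu i)) :=
    fun uu => Finset.sum_congr rfl fun j _ => by
      rw [Real.exp_sub, Real.exp_log (hcpos j), Real.exp_neg, div_eq_mul_inv]
  have hobj_mem : ∀ (uu : Fin n → ℝ) (l : Fin (r + 1) → ℝ), l ∈ Λ →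
      g l ≤ (∑ i, x i * uu i) - psiMonomial A v m a uu := by
    intro uu l hl
    rw [psiMonomial, if_neg hna, he1 uu]
    set t : Fin (r + 1) → ℝ := fun j => Real.log (c j) - (∑ i, (m j i : ℝ) * uu i) with ht
    have hgib := gibbs (k := r) t l hl.1 hl.2.1
    have hterm : ∑ j, l j * (t j - Real.log (l j)) = g l - ∑ i, x i * uu i := by
      have hstep : ∀ j, l j * (t j - Real.log (l j))
          = l j * Real.log (c j / l j) - l j * (∑ i, (m j i : ℝ) * uu i) :=
        fun j => term_split (hcpos j) (hl.1 j)
      rw [Finset.sum_congr rfl (fun j _ => hstep j), Finset.sum_sub_distrib,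
        sum_swap_lin m hl.2.2 uu, hg]
    rw [hterm] at hgib
    linarith
  have hupper : ∀ ε : ℝ, 0 < ε → ∃ uu : Fin n → ℝ,
      (∑ i, x i * uu i) - psiMonomial A v m a uu < θ + ε := by
    intro ε hε
    set B : ℝ := -(∑ j : Fin (r + 1), |Real.log (c j)|) with hB
    have hHlb : ∀ l : Fin (r + 1) → ℝ, (∀ j, 0 ≤ l j) → (∑ j, l j) = 1 → B ≤ H l := by
      intro l hl0 hl1
      have hl1' : ∀ j, l j ≤ 1 := fun j =>
        (Finset.single_le_sum (fun i _ => hl0 i) (Finset.mem_univ j)).trans (le_of_eq hl1)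
      rw [hB, hH]
      calc -(∑ j : Fin (r + 1), |Real.log (c j)|)
          = ∑ j : Fin (r + 1), -|Real.log (c j)| := by rw [Finset.sum_neg_distrib]
        _ ≤ ∑ j, (l j * Real.log (c j) + Real.negMulLog (l j)) := by
            refine Finset.sum_le_sum fun j _ => ?_
            have h1 : 0 ≤ Real.negMulLog (l j) := Real.negMulLog_nonneg (hl0 j) (hl1' j)
            have h2 : |l j * Real.log (c j)| ≤ |Real.log (c j)| := by
              rw [abs_mul]
              exact mul_le_of_le_one_left (abs_nonneg _)
                (by rw [abs_of_nonneg (hl0 j)]; exact hl1' j)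
            have h3 := neg_abs_le (l j * Real.log (c j))
            have h4 := abs_nonneg (l j * Real.log (c j))
            linarith [neg_le_neg h2]
    set lowM : ℝ := min B θ with hlowM
    set D : Set ((Fin n → ℝ) × ℝ) := {q | ∃ l : Fin (r + 1) → ℝ, (∀ j, 0 ≤ l j) ∧
      (∑ j, l j) = 1 ∧ (∀ i, (∑ j, l j * (m j i : ℝ)) = q.1 i) ∧
      lowM ≤ q.2 ∧ q.2 ≤ H l} with hD
    have hDconv : Convex ℝ D := by
      rintro ⟨y1, t1⟩ ⟨l1, h10, h11, h1c, h1m, h1H⟩ ⟨y2, t2⟩ ⟨l2, h20, h21, h2c, h2m, h2H⟩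
        p q hp hq hpq
      have hsnd : (p • ((y1, t1) : (Fin n → ℝ) × ℝ) + q • (y2, t2)).2 = p * t1 + q * t2 := rfl
      have hcon : p * H l1 + q * H l2 ≤ H (fun j => p * l1 j + q * l2 j) := by
        rw [hH]
        simp only
        rw [Finset.mul_sum, Finset.mul_sum, ← Finset.sum_add_distrib]
        refine Finset.sum_le_sum fun j _ => ?_
        have hnm := Real.concaveOn_negMulLog.2 (Set.mem_Ici.mpr (h10 j))
          (Set.mem_Ici.mpr (h20 j)) hp hq hpq
        simp only [smul_eq_mul] at hnm
        nlinarith [hnm]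
      refine ⟨fun j => p * l1 j + q * l2 j,
        fun j => add_nonneg (mul_nonneg hp (h10 j)) (mul_nonneg hq (h20 j)), ?_, ?_, ?_, ?_⟩
      · rw [Finset.sum_add_distrib, ← Finset.mul_sum, ← Finset.mul_sum, h11, h21,
          mul_one, mul_one, hpq]
      · intro i
        have hswap : ∑ j, (p * l1 j + q * l2 j) * (m j i : ℝ)
            = p * (∑ j, l1 j * (m j i : ℝ)) + q * (∑ j, l2 j * (m j i : ℝ)) := by
          rw [Finset.mul_sum, Finset.mul_sum, ← Finset.sum_add_distrib]
          exact Finset.sum_congr rfl fun j _ => by ring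
        rw [hswap, h1c i, h2c i]
        rfl
      · rw [hsnd]
        have ha := mul_le_mul_of_nonneg_left h1m hp
        have hb := mul_le_mul_of_nonneg_left h2m hq
        simp only at ha hb
        have hcomb : p * lowM + q * lowM = lowM := by rw [← add_mul, hpq, one_mul]
        linarith [ha, hb, hcomb]
      · rw [hsnd]
        have ha := mul_le_mul_of_nonneg_left h1H hp
        have hb := mul_le_mul_of_nonneg_left h2H hq
        simp only at ha hb
        linarith [ha, hb, hcon]
    have hSne : ({l : Fin (r + 1) → ℝ | (∀ j, 0 ≤ l j) ∧ ∑ j, l j = 1}).Nonempty := by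
      refine ⟨fun j => if j = (0 : Fin (r + 1)) then 1 else 0, fun j => ?_, by simp⟩
      by_cases hj : j = 0 <;> simp [hj]
    obtain ⟨lmax, hlmaxS, hlmaxmax⟩ := simplex_compact.exists_isMaxOn hSne hHcont.continuousOn
    set C : Set ((Fin (r + 1) → ℝ) × ℝ) := {lt | (∀ j, 0 ≤ lt.1 j) ∧ (∑ j, lt.1 j) = 1 ∧
      lt.2 ∈ Set.Icc lowM (H lt.1)} with hC
    have hCclosed : IsClosed C := by
      have hCeq : C = ((fun lt : (Fin (r + 1) → ℝ) × ℝ => lt.1) ⁻¹'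
          {l : Fin (r + 1) → ℝ | (∀ j, 0 ≤ l j) ∧ ∑ j, l j = 1}) ∩
          ({lt : (Fin (r + 1) → ℝ) × ℝ | lowM ≤ lt.2} ∩
            {lt : (Fin (r + 1) → ℝ) × ℝ | lt.2 ≤ H lt.1}) := by
        ext lt
        constructor
        · rintro ⟨h1, h2, h3⟩
          exact ⟨⟨h1, h2⟩, h3.1, h3.2⟩
        · rintro ⟨⟨h1, h2⟩, h3, h4⟩
          exact ⟨h1, h2, h3, h4⟩
      rw [hCeq]
      exact (simplex_closed.preimage continuous_fst).inter
        ((isClosed_le continuous_const continuous_snd).inter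
          (isClosed_le continuous_snd (hHcont.comp continuous_fst)))
    have hCsub : C ⊆ {l : Fin (r + 1) → ℝ | (∀ j, 0 ≤ l j) ∧ ∑ j, l j = 1} ×ˢ
        Set.Icc lowM (H lmax) := by
      rintro ⟨l, t⟩ ⟨h1, h2, h3⟩
      exact ⟨⟨h1, h2⟩, h3.1, h3.2.trans (hlmaxmax ⟨h1, h2⟩)⟩
    have hCcomp : IsCompact C := IsCompact.of_isClosed_subset
      (simplex_compact.prod isCompact_Icc) hCclosed hCsub
    set π : (Fin (r + 1) → ℝ) × ℝ → (Fin n → ℝ) × ℝ :=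
      fun lt => ((fun i => ∑ j, lt.1 j * (m j i : ℝ)), lt.2) with hπ
    have hπcont : Continuous π := Continuous.prodMk
      (continuous_pi fun i => continuous_finset_sum _ fun j _ =>
        (((continuous_apply j).comp continuous_fst).mul continuous_const))
      continuous_snd
    have hDeq : D = π '' C := by
      ext q
      constructor
      · rintro ⟨l, h0, h1, hcoord, hm1, hm2⟩
        refine ⟨(l, q.2), ⟨h0, h1, hm1, hm2⟩, ?_⟩
        apply Prod.ext
        · funext i
          exact hcoord i
        · rfl
      · rintro ⟨⟨l, t⟩, ⟨h0, h1, hm⟩, rfl⟩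
        exact ⟨l, h0, h1, fun i => rfl, hm.1, hm.2⟩
    have hDclosed : IsClosed D := hDeq ▸ (hCcomp.image hπcont).isClosed
    have hθlow : lowM ≤ θ := min_le_right _ _
    have hmemθ : (x, θ) ∈ D :=
      ⟨lst, hlstΛ.1, hlstΛ.2.1, fun i => hlstΛ.2.2 i, hθlow,
        le_of_eq (by rw [hθ, hgH lst hlstΛ.1])⟩
    have hnmem : (x, θ + ε) ∉ D := by
      rintro ⟨l, h0, h1, hcoord, hm1, hm2⟩
      have hlΛ : l ∈ Λ := ⟨h0, h1, hcoord⟩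
      have h4 : g l ≤ g lst := hlstmax l hlΛ
      rw [← hgH l h0] at hm2
      rw [← hθ] at h4
      simp only at hm2
      linarith
    obtain ⟨uvec, hsep⟩ := sep_core hε D hDconv hDclosed hmemθ hnmem
    refine ⟨uvec, ?_⟩
    set t : Fin (r + 1) → ℝ := fun j => Real.log (c j) - (∑ i, (m j i : ℝ) * uvec i) with ht
    have hS : (0:ℝ) < ∑ j, Real.exp (t j) :=
      Finset.sum_pos (fun _ _ => Real.exp_pos _) Finset.univ_nonempty
    set lam : Fin (r + 1) → ℝ := fun j => Real.exp (t j) / (∑ i, Real.exp (t i)) with hlam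
    have hlam0 : ∀ j, 0 ≤ lam j := fun j => (div_pos (Real.exp_pos _) hS).le
    have hlam1 : ∑ j, lam j = 1 := by
      rw [hlam, ← Finset.sum_div, div_self (ne_of_gt hS)]
    set yv : Fin n → ℝ := fun i => ∑ j, lam j * (m j i : ℝ) with hyv
    have hmemD : (yv, H lam) ∈ D :=
      ⟨lam, hlam0, hlam1, fun i => rfl,
        le_trans (min_le_left _ _) (hHlb lam hlam0 hlam1), le_refl _⟩
    have hs := hsep yv (H lam) hmemD
    have h1 : H lam = ∑ j, lam j * (Real.log (c j) - Real.log (lam j)) := by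
      rw [hH]
      exact Finset.sum_congr rfl fun j _ => by rw [Real.negMulLog]; ring
    have h2 : ∑ i, yv i * uvec i = ∑ j, lam j * (∑ i, (m j i : ℝ) * uvec i) :=
      (sum_swap_lin m (fun i => rfl) uvec).symm
    have h3 : H lam - ∑ i, yv i * uvec i = ∑ j, lam j * (t j - Real.log (lam j)) := by
      rw [h1, h2, ← Finset.sum_sub_distrib]
      exact Finset.sum_congr rfl fun j _ => by rw [ht]; ring
    have h4 : ∑ j, lam j * (t j - Real.log (lam j)) = Real.log (∑ j, Real.exp (t j)) := by
      simp only [hlam]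
      exact softmax_eq (k := r) t
    have hpsi : psiMonomial A v m a uvec = - Real.log (∑ j, Real.exp (t j)) := by
      rw [psiMonomial, if_neg hna, he1 uvec]
    rw [hpsi]
    linarith
  rw [legendreDualFn]
  have hlb : ∀ b ∈ Set.range (fun u : Fin n → ℝ =>
      (∑ i, x i * u i) - psiMonomial A v m a u), θ ≤ b := by
    rintro b ⟨uu, rfl⟩
    exact csSup_le (hΛne.image g) (by rintro val ⟨l, hl, rfl⟩; exact hobj_mem uu l hl)
  apply le_antisymm
  · by_contra hlt
    push_neg at hlt
    obtain ⟨uu, huu⟩ := hupper (sInf (Set.range fun u : Fin n → ℝ =>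
      (∑ i, x i * u i) - psiMonomial A v m a u) - θ) (by linarith)
    have hle : sInf (Set.range fun u : Fin n → ℝ =>
        (∑ i, x i * u i) - psiMonomial A v m a u)
          ≤ (∑ i, x i * uu i) - psiMonomial A v m a uu :=
      csInf_le ⟨θ, hlb⟩ ⟨uu, rfl⟩
    linarith
  · exact le_csInf (Set.range_nonempty _) hlb

end Main
end ToricAux

/-- **The toric metrized divisor `D̄_{m,α}`** (Proposition 5.10).  Let `(K, 𝔐)` be an
adelic field satisfying the product formula, `m ∈ M^{r+1}`, `α ∈ (K^×)^{r+1}`, and let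
`D̄ = D̄_{m,α}` be the toric metrized divisor on a projective toric variety compatible
with `Δ = conv(m₀,…,m_r)`, whose `v`-adic metric is the homothecy by `|α₀|_v⁻¹` of the
inverse image, under the monomial map `φ_{m,α}`, of the `ℓ¹`/canonical metric on the
hyperplane divisor of `ℙ^r_K`; `D̄` is encoded by its metric functions `psiPullback`.
Then: (1) `D̄` is semipositive (all metric functions are concave); (2) `D̄` is generated
by small sections — the monomial global sections `α_j χ^{m_j} s_D` (whose exponents span
`Δ`) are `D̄`-small; (3) the `v`-adic metric satisfies
`‖s_D(p)‖_v = (∑_j |α_j χ^{m_j}(p)|_v)⁻¹` (Archimedean `v`) resp.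
`(max_j |α_j χ^{m_j}(p)|_v)⁻¹` (non-Archimedean `v`) at every point `p` of the torus
over any adelic extension; (4) the `v`-adic metric function is given by `psiMonomial`;
and (5) the `v`-adic roof function is given by `roofMonomial` on `Δ`. -/
theorem toric_metrized_divisor_of_monomial_map
    (K : Type) [Field K] [Infinite K] (A : AdelicField K) (hpf : A.ProductFormula)
    {n r : ℕ} (m : Fin (r + 1) → Fin n → ℤ) (a : Fin (r + 1) → Kˣ) :
    (∀ v, ConcaveOn ℝ Set.univ (psiPullback A m a v)) ∧
    (∀ (v : A.places) (u : Fin n → ℝ) (j : Fin (r + 1)),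
      psiPullback A m a v u ≤ (∑ i, (m j i : ℝ) * u i) - Real.log (A.absv v ↑(a j))) ∧
    (∀ (F : Type) [Field F] [Algebra K F] [FiniteDimensional K F]
      (ext : AdelicExtensionOf A F), ext.WeightSpec →
      ∀ (w : ext.B.places) (p : Fin n → Fˣ),
        Real.exp (psiPullback A m a (ext.res w)
            (valVec (ext.B.absv w) fun i => ((p i : F)))) =
          (if A.IsNonarch (ext.res w) then
            sSup (Set.range fun j : Fin (r + 1) =>
              ext.B.absv w (algebraMap K F ↑(a j) * ((∏ i, p i ^ m j i : Fˣ) : F)))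
          else
            ∑ j : Fin (r + 1),
              ext.B.absv w (algebraMap K F ↑(a j) * ((∏ i, p i ^ m j i : Fˣ) : F)))⁻¹) ∧
    (∀ (v : A.places) (u : Fin n → ℝ), psiPullback A m a v u = psiMonomial A v m a u) ∧
    (∀ (v : A.places) (x : Fin n → ℝ),
      x ∈ convexHull ℝ (Set.range fun j => toRealVec (m j)) →
      legendreDualFn (psiPullback A m a v) x = roofMonomial A v m a x) := by
  have heq : ∀ v, psiPullback A m a v = psiMonomial A v m a :=
    fun v => funext fun u => ToricAux.psiPullback_eq A v m a u
  refine ⟨?_, ?_, ?_, ?_, ?_⟩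
  · intro v
    rw [heq v]
    exact ToricAux.psiMonomial_concave A v m a
  · intro v u j
    rw [ToricAux.psiPullback_eq A v m a u]
    exact ToricAux.psiMonomial_le A v m a u j
  · intro F _ _ _ ext _ w p
    rw [heq (ext.res w)]
    exact ToricAux.exp_psiMonomial A (ext.res w) m a (ext.B.absv w)
      (fun y => ext.compat w y) p
  · exact fun v u => ToricAux.psiPullback_eq A v m a u
  · intro v x hx
    rw [heq v, roofMonomial]
    by_cases hna : A.IsNonarch v
    · rw [if_pos hna]
      exact ToricAux.legendre_nonarch A v m a hna hx
    · rw [if_neg hna]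
      exact ToricAux.legendre_arch A v m a hna hx

end
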